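/- Let V and Q be Hilbert spaces, a : V × V → ℝ a continuous symmetric positive semi-definite bilinear form, b : V × Q → ℝ a continuous bilinear form, and c : Q × Q → ℝ a symmetric positive semi-definite bilinear form. Suppose there exist constants α, β, γ > 0 such that (i) α‖v‖² ≤ a(v,v) for all v in the kernel of the operator B induced by b, (ii) β‖q‖ ≤ sup_{v ≠ 0} b(v,q)/‖v‖ for all q ∈ Q, and (iii) γ‖u‖ ≤ sup_{(v,q) ≠ 0} (a(u,v) + b(u,q))/(‖v‖² + ‖q‖² + t²c(q,q))^{1/2} for all u ∈ V, where t ∈ [0,1] and Q is complete with respect to the norm (‖q‖² + t²c(q,q))^{1/2}. Then for every F ∈ V' and G ∈ Q' there exists a unique pair (u,p) ∈ V × Q satisfying a(u,v) + b(v,p) = F(v) for all v ∈ V and b(u,q) − t²c(p,q) = G(q) for all q ∈ Q, and moreover ‖u‖² + ‖p‖² + t²c(p,p) ≤ C(‖F‖_{V'}² + ‖G‖²) for a constant C depending only on the constants in the assumptions. -/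

import Mathlib

open scoped RealInnerProductSpace
open InnerProductSpace

def WProd (V Q : Type*) := V × Q

theorem bbb_cs {W : Type*} [AddCommGroup W] [Module ℝ W] (B : W →ₗ[ℝ] W →ₗ[ℝ] ℝ)
    (hsymm : ∀ x y, B x y = B y x) (hpsd : ∀ x, 0 ≤ B x x) (x y : W) :
    (B x y) ^ 2 ≤ B x x * B y y := by
  have h : ∀ s : ℝ, 0 ≤ B y y * (s * s) + (2 * B x y) * s + B x x := by
    intro s
    have h0 := hpsd (x + s • y)
    simp only [map_add, map_smul, LinearMap.add_apply, LinearMap.smul_apply, smul_eq_mul] at h0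
    rw [hsymm y x] at h0
    nlinarith [h0]
  have hd := discrim_le_zero h
  rw [discrim] at hd
  nlinarith [hd]

theorem bbb_cs2 (A B x y : ℝ) (hx : 0 ≤ x) (hy : 0 ≤ y) :
    A * x + B * y ≤ Real.sqrt (A ^ 2 + B ^ 2) * Real.sqrt (x ^ 2 + y ^ 2) := by
  have h1 : (0:ℝ) ≤ A ^ 2 + B ^ 2 := by positivity
  have h2 : (0:ℝ) ≤ x ^ 2 + y ^ 2 := by positivity
  have e1 := Real.sq_sqrt h1
  have e2 := Real.sq_sqrt h2
  have n1 := Real.sqrt_nonneg (A ^ 2 + B ^ 2)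
  have n2 := Real.sqrt_nonneg (x ^ 2 + y ^ 2)
  nlinarith [sq_nonneg (A * y - B * x),
    sq_nonneg (Real.sqrt (A ^ 2 + B ^ 2) * Real.sqrt (x ^ 2 + y ^ 2) - A * x - B * y),
    mul_nonneg n1 n2]

theorem bbb_quad (L M S : ℝ) (hL : 2 ≤ L) (hM : 0 ≤ M) (hS : 0 ≤ S)
    (h : M ^ 2 ≤ L * S ^ 2 + L * S * M) : M ≤ 2 * L * S := by
  by_contra hc
  push_neg at hc
  rcases eq_or_lt_of_le hS with hS0 | hS0
  · rw [← hS0] at h hc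
    simp only [mul_zero, zero_mul, add_zero, zero_add] at h hc
    nlinarith [mul_pos hc hc]
  · have hLS : 0 < L * S := by positivity
    have hM0 : 0 < M := lt_trans (by nlinarith) hc
    have k1 : M * M > 2 * L * S * M := by nlinarith [mul_lt_mul_of_pos_right hc hM0]
    have k2 : L * S * M < L * S * S := by nlinarith
    have k3 : M < S := (mul_lt_mul_iff_right₀ hLS).mp k2
    nlinarith

theorem bbb_aux {X : Type*} [NormedAddCommGroup X] [InnerProductSpace ℝ X] [CompleteSpace X]
    (A : X →L[ℝ] X →L[ℝ] ℝ) (hs : ∀ x y, A x y = A y x) (δ : ℝ) (hδ : 0 < δ)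
    (hlb : ∀ x, δ * ‖x‖ ≤ ‖continuousLinearMapOfBilin (𝕜 := ℝ) A x‖) (L : X →L[ℝ] ℝ) :
    (∃! x : X, ∀ y, A x y = L y) ∧ ∀ x : X, (∀ y, A x y = L y) → δ * ‖x‖ ≤ ‖L‖ := by
  set T := continuousLinearMapOfBilin (𝕜 := ℝ) A with hT
  have hTapp : ∀ x y, ⟪T x, y⟫ = A x y := fun x y => continuousLinearMapOfBilin_apply A x y
  have hTsymm : ∀ x y, ⟪T x, y⟫ = ⟪x, T y⟫ := by
    intro x y
    rw [hTapp, hs, ← hTapp, real_inner_comm]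
  have hTinj : Function.Injective T := by
    intro x y hxy
    have h1 : δ * ‖x - y‖ ≤ ‖T (x - y)‖ := hlb _
    rw [map_sub, hxy, sub_self, norm_zero] at h1
    have h2 : ‖x - y‖ = 0 := le_antisymm (nonpos_of_mul_nonpos_right h1 hδ) (norm_nonneg _)
    exact sub_eq_zero.mp (norm_eq_zero.mp h2)
  have hclosed : IsClosed (LinearMap.range (T : X →ₗ[ℝ] X) : Set X) := by
    have anti : AntilipschitzWith (δ⁻¹).toNNReal T := by
      refine ContinuousLinearMap.antilipschitz_of_bound T ?_
      intro x
      rw [Real.coe_toNNReal _ (le_of_lt (inv_pos.mpr hδ))]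
      calc ‖x‖ = δ⁻¹ * (δ * ‖x‖) := by field_simp
        _ ≤ δ⁻¹ * ‖T x‖ := by
            exact mul_le_mul_of_nonneg_left (hlb x) (le_of_lt (inv_pos.mpr hδ))
    exact anti.isClosed_range T.uniformContinuous
  have hsurj : Function.Surjective T := by
    haveI := hclosed.completeSpace_coe
    have hrange : LinearMap.range (T : X →ₗ[ℝ] X) = ⊤ := by
      rw [← (LinearMap.range (T : X →ₗ[ℝ] X)).orthogonal_orthogonal, Submodule.eq_top_iff']
      intro v w mem_w_orthogonal
      obtain rfl : w = 0 := by
        have hTw : T w = 0 := by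
          apply ext_inner_left ℝ
          intro z
          rw [← hTsymm z w, inner_zero_right]
          exact mem_w_orthogonal _ ⟨z, rfl⟩
        have h1 : δ * ‖w‖ ≤ 0 := by simpa [hTw] using hlb w
        have h2 : ‖w‖ = 0 := le_antisymm (nonpos_of_mul_nonpos_right h1 hδ) (norm_nonneg _)
        exact norm_eq_zero.mp h2
      exact inner_zero_left _
    intro w
    have : w ∈ LinearMap.range (T : X →ₗ[ℝ] X) := hrange ▸ Submodule.mem_top
    exact this
  set w := (toDual ℝ X).symm L with hwdef
  have hkey : ∀ x : X, (∀ y, A x y = L y) ↔ T x = w := by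
    intro x
    constructor
    · intro h
      apply ext_inner_right ℝ
      intro z
      rw [hTapp, h z, hwdef, toDual_symm_apply]
    · intro h y
      rw [← hTapp, h, toDual_symm_apply]
  obtain ⟨x, hx⟩ := hsurj w
  refine ⟨⟨x, (hkey x).mpr hx, ?_⟩, ?_⟩
  · intro y hy
    exact hTinj (((hkey y).mp hy).trans hx.symm)
  · intro x' hx'
    have : T x' = w := (hkey x').mp hx'
    have hn : ‖T x'‖ = ‖L‖ := by
      rw [this, hwdef]
      exact LinearIsometryEquiv.norm_map _ _
    rw [← hn]; exact hlb x'
set_option maxHeartbeats 2000000 in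
/-- Extended Babuška–Brezzi–Braess theory for perturbed saddle-point problems. -/
theorem stmt_0
    {V Q : Type*}
    [NormedAddCommGroup V] [InnerProductSpace ℝ V] [CompleteSpace V]
    [NormedAddCommGroup Q] [InnerProductSpace ℝ Q] [CompleteSpace Q]
    (a : V →ₗ[ℝ] V →ₗ[ℝ] ℝ) (b : V →ₗ[ℝ] Q →ₗ[ℝ] ℝ) (c : Q →ₗ[ℝ] Q →ₗ[ℝ] ℝ)
    (Ca Cb : ℝ)
    (ha_cont : ∀ u v, |a u v| ≤ Ca * ‖u‖ * ‖v‖)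
    (ha_symm : ∀ u v, a u v = a v u)
    (ha_psd : ∀ v, 0 ≤ a v v)
    (hb_cont : ∀ v q, |b v q| ≤ Cb * ‖v‖ * ‖q‖)
    (hc_symm : ∀ p q, c p q = c q p)
    (hc_psd : ∀ q, 0 ≤ c q q)
    (t : ℝ) (ht0 : 0 ≤ t) (ht1 : t ≤ 1)
    (wnorm : Q → ℝ)
    (hw : ∀ q, wnorm q = Real.sqrt (‖q‖ ^ 2 + t ^ 2 * c q q))
    -- Q is complete with respect to the weighted norm
    (hQcomplete : ∀ f : ℕ → Q,
      (∀ ε > (0 : ℝ), ∃ N, ∀ m ≥ N, ∀ n ≥ N, wnorm (f m - f n) < ε) →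
      ∃ q : Q, ∀ ε > (0 : ℝ), ∃ N, ∀ n ≥ N, wnorm (f n - q) < ε)
    (α β γ : ℝ) (hα : 0 < α) (hβ : 0 < β) (hγ : 0 < γ)
    -- (i) coercivity of a on the kernel of B
    (hker : ∀ v : V, (∀ q : Q, b v q = 0) → α * ‖v‖ ^ 2 ≤ a v v)
    -- (ii) inf-sup condition for b
    (hinfsup : ∀ q : Q, β * ‖q‖ ≤ ⨆ v : {v : V // v ≠ 0}, b v.1 q / ‖v.1‖)
    -- (iii) Braess condition
    (hbraess : ∀ u : V, γ * ‖u‖ ≤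
      ⨆ vq : {vq : V × Q // vq ≠ 0},
        (a u vq.1.1 + b u vq.1.2) /
          Real.sqrt (‖vq.1.1‖ ^ 2 + ‖vq.1.2‖ ^ 2 + t ^ 2 * c vq.1.2 vq.1.2)) :
    ∃ C : ℝ, 0 < C ∧
      ∀ (F : V →L[ℝ] ℝ) (G : Q → ℝ), IsLinearMap ℝ G →
      ∀ NG : ℝ, (∀ q, |G q| ≤ NG * wnorm q) →
      (∃! up : V × Q,
          (∀ v, a up.1 v + b v up.2 = F v) ∧
          (∀ q, b up.1 q - t ^ 2 * c up.2 q = G q)) ∧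
      (∀ up : V × Q,
          ((∀ v, a up.1 v + b v up.2 = F v) ∧
           (∀ q, b up.1 q - t ^ 2 * c up.2 q = G q)) →
          ‖up.1‖ ^ 2 + ‖up.2‖ ^ 2 + t ^ 2 * c up.2 up.2 ≤ C * (‖F‖ ^ 2 + NG ^ 2)) := by
  classical
  have haCS : ∀ u v, (a u v) ^ 2 ≤ a u u * a v v := bbb_cs a ha_symm ha_psd
  have hcCS : ∀ p q, (c p q) ^ 2 ≤ c p p * c q q := bbb_cs c hc_symm hc_psd
  -- Cauchy-Schwarz for the scaled form t^2 c
  have htc : ∀ p q : Q, |t ^ 2 * c p q| ≤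
      Real.sqrt (t ^ 2 * c p p) * Real.sqrt (t ^ 2 * c q q) := by
    intro p q
    have h1 : (0:ℝ) ≤ t ^ 2 * c p p := by have := hc_psd p; positivity
    rw [← Real.sqrt_mul h1, ← Real.sqrt_sq_eq_abs]
    apply Real.sqrt_le_sqrt
    nlinarith [hcCS p q, mul_le_mul_of_nonneg_left (hcCS p q) (sq_nonneg (t ^ 2))]
  letI : AddCommGroup (WProd V Q) := inferInstanceAs (AddCommGroup (V × Q))
  letI : Module ℝ (WProd V Q) := inferInstanceAs (Module ℝ (V × Q))
  letI core : InnerProductSpace.Core ℝ (WProd V Q) :=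
    { inner := fun x y => (⟪x.1, y.1⟫_ℝ + ⟪x.2, y.2⟫_ℝ + t ^ 2 * c x.2 y.2 : ℝ)
      conj_inner_symm := by
        intro x y
        simp only [starRingEnd_apply, star_trivial]
        rw [real_inner_comm y.1 x.1, real_inner_comm y.2 x.2, hc_symm]
      re_inner_nonneg := by
        intro x
        simp only [RCLike.re_to_real]
        have := real_inner_self_nonneg (x := x.1)
        have := real_inner_self_nonneg (x := x.2)
        have := hc_psd x.2
        positivity
      add_left := by
        intro x y z
        show (⟪x.1 + y.1, z.1⟫_ℝ + ⟪x.2 + y.2, z.2⟫_ℝ + t ^ 2 * c (x.2 + y.2) z.2 : ℝ) = _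
        rw [inner_add_left, inner_add_left, map_add, LinearMap.add_apply]
        ring
      smul_left := by
        intro x y r
        show (⟪r • x.1, y.1⟫_ℝ + ⟪r • x.2, y.2⟫_ℝ + t ^ 2 * c (r • x.2) y.2 : ℝ) = _
        rw [real_inner_smul_left, real_inner_smul_left, map_smul, LinearMap.smul_apply,
          smul_eq_mul]
        simp only [starRingEnd_apply, star_trivial]
        ring
      definite := by
        intro x hx
        have h1 : (0:ℝ) ≤ ⟪x.1, x.1⟫_ℝ := real_inner_self_nonneg
        have h2 : (0:ℝ) ≤ ⟪x.2, x.2⟫_ℝ := real_inner_self_nonneg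
        have h3 : (0:ℝ) ≤ t ^ 2 * c x.2 x.2 := by have := hc_psd x.2; positivity
        have hx' : (⟪x.1, x.1⟫_ℝ + ⟪x.2, x.2⟫_ℝ + t ^ 2 * c x.2 x.2 : ℝ) = 0 := hx
        have e1 : ⟪x.1, x.1⟫_ℝ = 0 := by linarith
        have e2 : ⟪x.2, x.2⟫_ℝ = 0 := by linarith
        have : x.1 = 0 := by rwa [inner_self_eq_zero] at e1
        have : x.2 = 0 := by rwa [inner_self_eq_zero] at e2
        exact Prod.ext ‹x.1 = 0› ‹x.2 = 0› }
  letI : NormedAddCommGroup (WProd V Q) := core.toNormedAddCommGroup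
  letI : InnerProductSpace ℝ (WProd V Q) := InnerProductSpace.ofCore core.toCore
  have hip : ∀ x y : WProd V Q,
      ⟪x, y⟫_ℝ = ⟪x.1, y.1⟫_ℝ + ⟪x.2, y.2⟫_ℝ + t ^ 2 * c x.2 y.2 := fun x y => rfl
  have hnormsq : ∀ x : WProd V Q,
      ‖x‖ ^ 2 = ‖x.1‖ ^ 2 + ‖x.2‖ ^ 2 + t ^ 2 * c x.2 x.2 := by
    intro x
    rw [← real_inner_self_eq_norm_sq, hip, real_inner_self_eq_norm_sq,
      real_inner_self_eq_norm_sq]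

  have hnorm : ∀ x : WProd V Q,
      ‖x‖ = Real.sqrt (‖x.1‖ ^ 2 + ‖x.2‖ ^ 2 + t ^ 2 * c x.2 x.2) := by
    intro x
    rw [← hnormsq x, Real.sqrt_sq (norm_nonneg x)]
  have hb1 : ∀ x : WProd V Q, ‖x.1‖ ≤ ‖x‖ := by
    intro x
    have h3 : (0:ℝ) ≤ t ^ 2 * c x.2 x.2 := by have := hc_psd x.2; positivity
    calc ‖x.1‖ = Real.sqrt (‖x.1‖ ^ 2) := (Real.sqrt_sq (norm_nonneg _)).symm
      _ ≤ Real.sqrt (‖x‖ ^ 2) := Real.sqrt_le_sqrt (by nlinarith [hnormsq x, sq_nonneg ‖x.2‖])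
      _ = ‖x‖ := Real.sqrt_sq (norm_nonneg _)
  have hwnn : ∀ q : Q, 0 ≤ wnorm q := by
    intro q; rw [hw]; exact Real.sqrt_nonneg _
  have hwsq : ∀ q : Q, wnorm q ^ 2 = ‖q‖ ^ 2 + t ^ 2 * c q q := by
    intro q; rw [hw]
    exact Real.sq_sqrt (by have := hc_psd q; positivity)
  have hbw : ∀ x : WProd V Q, wnorm x.2 ≤ ‖x‖ := by
    intro x
    rw [hw, hnorm]
    exact Real.sqrt_le_sqrt (by nlinarith [sq_nonneg ‖x.1‖])
  have hb3 : ∀ x : WProd V Q, Real.sqrt (t ^ 2 * c x.2 x.2) ≤ ‖x‖ := by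
    intro x
    rw [hnorm]
    exact Real.sqrt_le_sqrt (by nlinarith [sq_nonneg ‖x.1‖, sq_nonneg ‖x.2‖])
  haveI hXc : CompleteSpace (WProd V Q) := by
    apply Metric.complete_of_cauchySeq_tendsto
    intro f hf
    rw [Metric.cauchySeq_iff] at hf
    have hfd : ∀ m n : ℕ, dist (f m) (f n) = ‖f m - f n‖ := fun m n => dist_eq_norm _ _
    have h1 : CauchySeq (fun n => (f n).1) := by
      rw [Metric.cauchySeq_iff]
      intro ε hε
      obtain ⟨N, hN⟩ := hf ε hε
      refine ⟨N, fun m hm n hn => ?_⟩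
      have hle : dist (f m).1 (f n).1 ≤ dist (f m) (f n) := by
        rw [dist_eq_norm, hfd]
        exact hb1 (f m - f n)
      exact lt_of_le_of_lt hle (hN m hm n hn)
    obtain ⟨u0, hu0⟩ := cauchySeq_tendsto_of_complete h1
    have hcau : ∀ ε > (0:ℝ), ∃ N, ∀ m ≥ N, ∀ n ≥ N, wnorm ((f m).2 - (f n).2) < ε := by
      intro ε hε
      obtain ⟨N, hN⟩ := hf ε hε
      refine ⟨N, fun m hm n hn => ?_⟩
      have hle : wnorm ((f m).2 - (f n).2) ≤ dist (f m) (f n) := by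
        rw [hfd]
        exact hbw (f m - f n)
      exact lt_of_le_of_lt hle (hN m hm n hn)
    obtain ⟨q0, hq0⟩ := hQcomplete _ hcau
    refine ⟨(show WProd V Q from (u0, q0)), ?_⟩
    rw [Metric.tendsto_atTop]
    intro ε hε
    have hε2 : 0 < ε / 2 := by linarith
    obtain ⟨N1, hN1⟩ := (Metric.tendsto_atTop.mp hu0) (ε / 2) hε2
    obtain ⟨N2, hN2⟩ := hq0 (ε / 2) hε2
    refine ⟨max N1 N2, fun n hn => ?_⟩
    have e1 : ‖(f n).1 - u0‖ < ε / 2 := by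
      rw [← dist_eq_norm]
      exact hN1 n (le_trans (le_max_left _ _) hn)
    have e2 : wnorm ((f n).2 - q0) < ε / 2 := hN2 n (le_trans (le_max_right _ _) hn)
    rw [dist_eq_norm]
    have hz : ‖f n - (show WProd V Q from (u0, q0))‖ ^ 2
        = ‖(f n).1 - u0‖ ^ 2 + wnorm ((f n).2 - q0) ^ 2 := by
      rw [hnormsq]
      have hq := hwsq ((f n).2 - q0)
      show ‖(f n).1 - u0‖ ^ 2 + ‖(f n).2 - q0‖ ^ 2 + t ^ 2 * c ((f n).2 - q0) ((f n).2 - q0) = _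
      linarith
    have hnn : 0 ≤ ‖f n - (show WProd V Q from (u0, q0))‖ := norm_nonneg _
    by_contra hcon
    push_neg at hcon
    nlinarith [mul_self_le_mul_self (le_of_lt hε) hcon,
      mul_self_lt_mul_self (norm_nonneg ((f n).1 - u0)) e1,
      mul_self_lt_mul_self (hwnn ((f n).2 - q0)) e2]
  -- the combined bilinear form
  have key : ∀ (D n1 n2 N1 N2 : ℝ), 0 ≤ n1 → 0 ≤ n2 → n1 ≤ N1 → n2 ≤ N2 →
      D * n1 * n2 ≤ |D| * N1 * N2 := by
    intro D n1 n2 N1 N2 h1 h2 h3 h4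
    calc D * n1 * n2 ≤ |D| * n1 * n2 :=
          mul_le_mul_of_nonneg_right (mul_le_mul_of_nonneg_right (le_abs_self D) h1) h2
      _ ≤ |D| * N1 * N2 := by
          apply mul_le_mul (mul_le_mul_of_nonneg_left h3 (abs_nonneg D)) h4 h2
          exact mul_nonneg (abs_nonneg D) (h1.trans h3)
  have hb2 : ∀ x : WProd V Q, ‖x.2‖ ≤ ‖x‖ := by
    intro x
    refine le_trans ?_ (hbw x)
    rw [hw]
    calc ‖x.2‖ = Real.sqrt (‖x.2‖ ^ 2) := (Real.sqrt_sq (norm_nonneg _)).symm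
      _ ≤ _ := Real.sqrt_le_sqrt (by nlinarith [hc_psd x.2, sq_nonneg t])
  have hbil : ∀ x y : WProd V Q,
      |a x.1 y.1 + b y.1 x.2 + b x.1 y.2 - t ^ 2 * c x.2 y.2|
        ≤ (|Ca| + 2 * |Cb| + 1) * ‖x‖ * ‖y‖ := by
    intro x y
    have m1 : |a x.1 y.1| ≤ |Ca| * ‖x‖ * ‖y‖ := (ha_cont _ _).trans
      (key Ca _ _ _ _ (norm_nonneg _) (norm_nonneg _) (hb1 x) (hb1 y))
    have m2 : |b y.1 x.2| ≤ |Cb| * ‖y‖ * ‖x‖ := (hb_cont _ _).trans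
      (key Cb _ _ _ _ (norm_nonneg _) (norm_nonneg _) (hb1 y) (hb2 x))
    have m3 : |b x.1 y.2| ≤ |Cb| * ‖x‖ * ‖y‖ := (hb_cont _ _).trans
      (key Cb _ _ _ _ (norm_nonneg _) (norm_nonneg _) (hb1 x) (hb2 y))
    have m4 : |t ^ 2 * c x.2 y.2| ≤ ‖x‖ * ‖y‖ := (htc _ _).trans
      (mul_le_mul (hb3 x) (hb3 y) (Real.sqrt_nonneg _) (norm_nonneg _))
    have tr1 := abs_sub (a x.1 y.1 + b y.1 x.2 + b x.1 y.2) (t ^ 2 * c x.2 y.2)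
    have tr2 := abs_add_le (a x.1 y.1 + b y.1 x.2) (b x.1 y.2)
    have tr3 := abs_add_le (a x.1 y.1) (b y.1 x.2)
    nlinarith [m1, m2, m3, m4, tr1, tr2, tr3]
  let A2 : (WProd V Q) →ₗ[ℝ] (WProd V Q) →ₗ[ℝ] ℝ := LinearMap.mk₂ ℝ
    (fun x y => a x.1 y.1 + b y.1 x.2 + b x.1 y.2 - t ^ 2 * c x.2 y.2)
    (by
      intro m1 m2 n
      show a (m1.1 + m2.1) n.1 + b n.1 (m1.2 + m2.2) + b (m1.1 + m2.1) n.2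
          - t ^ 2 * c (m1.2 + m2.2) n.2 = _
      simp only [map_add, LinearMap.add_apply]
      ring)
    (by
      intro r m n
      show a (r • m.1) n.1 + b n.1 (r • m.2) + b (r • m.1) n.2 - t ^ 2 * c (r • m.2) n.2 = _
      simp only [map_smul, LinearMap.smul_apply, smul_eq_mul]
      ring)
    (by
      intro m n1 n2
      show a m.1 (n1.1 + n2.1) + b (n1.1 + n2.1) m.2 + b m.1 (n1.2 + n2.2)
          - t ^ 2 * c m.2 (n1.2 + n2.2) = _
      simp only [map_add, LinearMap.add_apply]
      ring)
    (by
      intro r m n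
      show a m.1 (r • n.1) + b (r • n.1) m.2 + b m.1 (r • n.2) - t ^ 2 * c m.2 (r • n.2) = _
      simp only [map_smul, LinearMap.smul_apply, smul_eq_mul]
      ring)
  let Abil : (WProd V Q) →L[ℝ] (WProd V Q) →L[ℝ] ℝ :=
    LinearMap.mkContinuous₂ A2 (|Ca| + 2 * |Cb| + 1)
      (fun x y => by rw [Real.norm_eq_abs]; exact hbil x y)
  have hA_apply : ∀ x y : WProd V Q,
      Abil x y = a x.1 y.1 + b y.1 x.2 + b x.1 y.2 - t ^ 2 * c x.2 y.2 := fun x y => rfl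
  have hsA : ∀ x y : WProd V Q, Abil x y = Abil y x := by
    intro x y
    rw [hA_apply, hA_apply, ha_symm, hc_symm]
    ring
  set Tm := InnerProductSpace.continuousLinearMapOfBilin (𝕜 := ℝ) Abil with hTm
  have htest : ∀ x y : WProd V Q, Abil x y ≤ ‖Tm x‖ * ‖y‖ := by
    intro x y
    rw [← continuousLinearMapOfBilin_apply Abil x y]
    exact real_inner_le_norm _ _
  -- constants
  set K1 : ℝ := β⁻¹ * (1 + Real.sqrt |Ca|) with hK1def
  set K2 : ℝ := γ⁻¹ * (2 + |Cb| * K1) with hK2def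
  set Lc : ℝ := 2 * (K2 ^ 2 + K1 ^ 2 + 1) with hLcdef
  have hK1 : 0 ≤ K1 := by rw [hK1def]; positivity
  have hLc : 2 ≤ Lc := by rw [hLcdef]; nlinarith [sq_nonneg K1, sq_nonneg K2]
  set δ : ℝ := (2 * Lc)⁻¹ with hδdef
  have hδ : 0 < δ := by rw [hδdef]; exact inv_pos.mpr (by linarith)
  -- the inf-sup estimate
  have hlb : ∀ x : WProd V Q, δ * ‖x‖ ≤ ‖Tm x‖ := by
    intro x
    have hS0 : (0:ℝ) ≤ ‖Tm x‖ := norm_nonneg _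
    have hM0 : (0:ℝ) ≤ ‖x‖ := norm_nonneg _
    -- test with (x.1, -x.2)
    have h1 : a x.1 x.1 + t ^ 2 * c x.2 x.2 ≤ ‖Tm x‖ * ‖x‖ := by
      have ht1 := htest x (show WProd V Q from (x.1, -x.2))
      rw [hA_apply] at ht1
      have heq : a x.1 x.1 + b x.1 x.2 + b x.1 (-x.2) - t ^ 2 * c x.2 (-x.2)
          = a x.1 x.1 + t ^ 2 * c x.2 x.2 := by
        rw [map_neg, map_neg]
        ring
      have hny : ‖(show WProd V Q from (x.1, -x.2))‖ = ‖x‖ := by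
        rw [hnorm, hnorm x]
        congr 1
        show ‖x.1‖ ^ 2 + ‖-x.2‖ ^ 2 + t ^ 2 * c (-x.2) (-x.2) = _
        simp only [norm_neg, map_neg, LinearMap.neg_apply, neg_neg]
      calc a x.1 x.1 + t ^ 2 * c x.2 x.2
          = a x.1 x.1 + b x.1 x.2 + b x.1 (-x.2) - t ^ 2 * c x.2 (-x.2) := heq.symm
        _ ≤ ‖Tm x‖ * ‖(show WProd V Q from (x.1, -x.2))‖ := ht1
        _ = ‖Tm x‖ * ‖x‖ := by rw [hny]
    have hcpp : (0:ℝ) ≤ t ^ 2 * c x.2 x.2 := by have := hc_psd x.2; positivity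
    -- inf-sup for b
    have h2 : β * ‖x.2‖ ≤ ‖Tm x‖ + Real.sqrt |Ca| * Real.sqrt (a x.1 x.1) := by
      have hRnn : (0:ℝ) ≤ ‖Tm x‖ + Real.sqrt |Ca| * Real.sqrt (a x.1 x.1) := by
        have := Real.sqrt_nonneg |Ca|
        have := Real.sqrt_nonneg (a x.1 x.1)
        nlinarith
      rcases isEmpty_or_nonempty {v : V // v ≠ 0} with he | hne
      · have h0 := hinfsup x.2
        rw [Real.iSup_of_isEmpty] at h0
        linarith
      · refine (hinfsup x.2).trans (ciSup_le ?_)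
        rintro ⟨v, hv⟩
        show b v x.2 / ‖v‖ ≤ _
        have hvpos : 0 < ‖v‖ := norm_pos_iff.mpr hv
        rw [div_le_iff₀ hvpos]
        have ht2 := htest x (show WProd V Q from (v, 0))
        rw [hA_apply] at ht2
        have hz1 : b x.1 (0:Q) = 0 := map_zero _
        have hz2 : c x.2 (0:Q) = 0 := map_zero _
        have hn2 : ‖(show WProd V Q from (v, (0:Q)))‖ = ‖v‖ := by
          rw [hnorm]
          show Real.sqrt (‖v‖ ^ 2 + ‖(0:Q)‖ ^ 2 + t ^ 2 * c 0 0) = ‖v‖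
          rw [map_zero, norm_zero]
          simp only [ne_eq, OfNat.ofNat_ne_zero, not_false_eq_true, zero_pow, add_zero, mul_zero]
          exact Real.sqrt_sq (norm_nonneg v)
        rw [hz1, hz2, hn2] at ht2
        have hav : |a x.1 v| ≤ Real.sqrt (a x.1 x.1) * (Real.sqrt |Ca| * ‖v‖) := by
          have h5 : |a x.1 v| ≤ Real.sqrt (a x.1 x.1) * Real.sqrt (a v v) := by
            rw [← Real.sqrt_sq_eq_abs, ← Real.sqrt_mul (ha_psd x.1)]
            exact Real.sqrt_le_sqrt (haCS x.1 v)
          have h6 : Real.sqrt (a v v) ≤ Real.sqrt |Ca| * ‖v‖ := by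
            have h7 : a v v ≤ |Ca| * ‖v‖ ^ 2 := by
              have := (le_abs_self (a v v)).trans (ha_cont v v)
              nlinarith [le_abs_self Ca, norm_nonneg v, sq_nonneg ‖v‖,
                mul_le_mul_of_nonneg_right (mul_le_mul_of_nonneg_right (le_abs_self Ca)
                  (norm_nonneg v)) (norm_nonneg v)]
            calc Real.sqrt (a v v) ≤ Real.sqrt (|Ca| * ‖v‖ ^ 2) := Real.sqrt_le_sqrt h7
              _ = Real.sqrt |Ca| * ‖v‖ := by
                  rw [Real.sqrt_mul (abs_nonneg Ca), Real.sqrt_sq (norm_nonneg v)]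
          calc |a x.1 v| ≤ Real.sqrt (a x.1 x.1) * Real.sqrt (a v v) := h5
            _ ≤ _ := mul_le_mul_of_nonneg_left h6 (Real.sqrt_nonneg _)
        nlinarith [ht2, hav, neg_abs_le (a x.1 v)]
    -- Braess
    have h3 : γ * ‖x.1‖ ≤ ‖Tm x‖ + |Cb| * ‖x.2‖ + Real.sqrt (t ^ 2 * c x.2 x.2) := by
      have hRnn : (0:ℝ) ≤ ‖Tm x‖ + |Cb| * ‖x.2‖ + Real.sqrt (t ^ 2 * c x.2 x.2) := by
        have := Real.sqrt_nonneg (t ^ 2 * c x.2 x.2)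
        have := mul_nonneg (abs_nonneg Cb) (norm_nonneg x.2)
        linarith
      rcases isEmpty_or_nonempty {vq : V × Q // vq ≠ 0} with he | hne
      · have h0 := hbraess x.1
        rw [Real.iSup_of_isEmpty] at h0
        linarith
      · refine (hbraess x.1).trans (ciSup_le ?_)
        rintro ⟨⟨v, q⟩, hvq⟩
        show (a x.1 v + b x.1 q) / Real.sqrt (‖v‖ ^ 2 + ‖q‖ ^ 2 + t ^ 2 * c q q) ≤ _
        have hzne : (show WProd V Q from (v, q)) ≠ 0 := fun h0 => hvq h0
        have hDpos : 0 < ‖(show WProd V Q from (v, q))‖ := norm_pos_iff.mpr hzne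
        have hD : ‖(show WProd V Q from (v, q))‖
            = Real.sqrt (‖v‖ ^ 2 + ‖q‖ ^ 2 + t ^ 2 * c q q) := hnorm _
        rw [← hD, div_le_iff₀ hDpos]
        have ht3 := htest x (show WProd V Q from (v, q))
        rw [hA_apply] at ht3
        have hbv : |b v x.2| ≤ |Cb| * ‖(show WProd V Q from (v, q))‖ * ‖x.2‖ :=
          (hb_cont v x.2).trans (key Cb _ _ _ _ (norm_nonneg _) (norm_nonneg _)
            (hb1 (show WProd V Q from (v, q))) le_rfl)
        have htc2 : |t ^ 2 * c x.2 q| ≤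
            Real.sqrt (t ^ 2 * c x.2 x.2) * ‖(show WProd V Q from (v, q))‖ :=
          (htc x.2 q).trans (mul_le_mul_of_nonneg_left
            (hb3 (show WProd V Q from (v, q))) (Real.sqrt_nonneg _))
        nlinarith [ht3, hbv, htc2, neg_abs_le (b v x.2), le_abs_self (t ^ 2 * c x.2 q)]
    -- combine
    set s : ℝ := Real.sqrt (‖Tm x‖ * ‖x‖) with hsdef
    have hs0 : 0 ≤ s := Real.sqrt_nonneg _
    have hs2 : s ^ 2 = ‖Tm x‖ * ‖x‖ := Real.sq_sqrt (mul_nonneg hS0 hM0)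
    have hsa : Real.sqrt (a x.1 x.1) ≤ s := Real.sqrt_le_sqrt (by linarith)
    have hsc : Real.sqrt (t ^ 2 * c x.2 x.2) ≤ s := Real.sqrt_le_sqrt
      (by linarith [ha_psd x.1])
    have hp2 : ‖x.2‖ ≤ K1 * (‖Tm x‖ + s) := by
      have hfac : ‖Tm x‖ + Real.sqrt |Ca| * Real.sqrt (a x.1 x.1)
          ≤ (1 + Real.sqrt |Ca|) * (‖Tm x‖ + s) := by
        nlinarith [hS0, hs0, Real.sqrt_nonneg |Ca|, hsa,
          mul_le_mul_of_nonneg_left hsa (Real.sqrt_nonneg |Ca|)]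
      have h8 := h2.trans hfac
      rw [hK1def]
      calc ‖x.2‖ = β⁻¹ * (β * ‖x.2‖) := by field_simp
        _ ≤ β⁻¹ * ((1 + Real.sqrt |Ca|) * (‖Tm x‖ + s)) :=
            mul_le_mul_of_nonneg_left h8 (inv_nonneg.mpr hβ.le)
        _ = β⁻¹ * (1 + Real.sqrt |Ca|) * (‖Tm x‖ + s) := by ring
    have hp1 : ‖x.1‖ ≤ K2 * (‖Tm x‖ + s) := by
      have hfac : ‖Tm x‖ + |Cb| * ‖x.2‖ + Real.sqrt (t ^ 2 * c x.2 x.2)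
          ≤ (2 + |Cb| * K1) * (‖Tm x‖ + s) := by
        nlinarith [hS0, hs0, abs_nonneg Cb, hsc,
          mul_le_mul_of_nonneg_left hp2 (abs_nonneg Cb)]
      have h8 := h3.trans hfac
      rw [hK2def]
      calc ‖x.1‖ = γ⁻¹ * (γ * ‖x.1‖) := by field_simp
        _ ≤ γ⁻¹ * ((2 + |Cb| * K1) * (‖Tm x‖ + s)) :=
            mul_le_mul_of_nonneg_left h8 (inv_nonneg.mpr hγ.le)
        _ = γ⁻¹ * (2 + |Cb| * K1) * (‖Tm x‖ + s) := by ring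
    have q1 : ‖x.1‖ ^ 2 ≤ K2 ^ 2 * (‖Tm x‖ + s) ^ 2 := by
      nlinarith [mul_self_le_mul_self (norm_nonneg x.1) hp1]
    have q2 : ‖x.2‖ ^ 2 ≤ K1 ^ 2 * (‖Tm x‖ + s) ^ 2 := by
      nlinarith [mul_self_le_mul_self (norm_nonneg x.2) hp2]
    have q3 : t ^ 2 * c x.2 x.2 ≤ ‖Tm x‖ * ‖x‖ := by linarith [h1, ha_psd x.1]
    have q4 : (‖Tm x‖ + s) ^ 2 ≤ 2 * ‖Tm x‖ ^ 2 + 2 * (‖Tm x‖ * ‖x‖) := by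
      nlinarith [sq_nonneg (‖Tm x‖ - s), hs2]
    have hfin : ‖x‖ ^ 2 ≤ Lc * ‖Tm x‖ ^ 2 + Lc * ‖Tm x‖ * ‖x‖ := by
      have hmul := mul_le_mul_of_nonneg_left q4
        (by positivity : (0:ℝ) ≤ K2 ^ 2 + K1 ^ 2)
      rw [hLcdef]
      nlinarith [q1, q2, q3, hnormsq x, hmul, mul_nonneg hS0 hM0, sq_nonneg (‖Tm x‖)]
    have hquad := bbb_quad Lc ‖x‖ ‖Tm x‖ hLc hM0 hS0 hfin
    calc δ * ‖x‖ ≤ δ * (2 * Lc * ‖Tm x‖) := mul_le_mul_of_nonneg_left hquad hδ.le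
      _ = ‖Tm x‖ := by
          rw [hδdef]
          field_simp
  -- conclusion
  refine ⟨(δ⁻¹) ^ 2, by positivity, ?_⟩
  intro F G hG NG hNG
  have hGabs : ∀ q, |G q| ≤ |NG| * wnorm q := fun q =>
    (hNG q).trans (mul_le_mul_of_nonneg_right (le_abs_self NG) (hwnn q))
  let Llin : WProd V Q →ₗ[ℝ] ℝ :=
    { toFun := fun y => F y.1 + G y.2
      map_add' := by
        intro y z
        show F (y.1 + z.1) + G (y.2 + z.2) = F y.1 + G y.2 + (F z.1 + G z.2)
        rw [map_add, hG.map_add]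
        ring
      map_smul' := by
        intro r y
        show F (r • y.1) + G (r • y.2) = r * (F y.1 + G y.2)
        rw [map_smul, hG.map_smul, smul_eq_mul, smul_eq_mul]
        ring }
  have hLbound : ∀ y : WProd V Q, ‖Llin y‖ ≤ Real.sqrt (‖F‖ ^ 2 + NG ^ 2) * ‖y‖ := by
    intro y
    rw [Real.norm_eq_abs]
    show |F y.1 + G y.2| ≤ _
    have t1 : |F y.1 + G y.2| ≤ ‖F‖ * ‖y.1‖ + |NG| * wnorm y.2 := by
      refine (abs_add_le _ _).trans (add_le_add ?_ (hGabs y.2))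
      rw [← Real.norm_eq_abs]
      exact F.le_opNorm y.1
    have t2 := bbb_cs2 ‖F‖ |NG| ‖y.1‖ (wnorm y.2) (norm_nonneg _) (hwnn _)
    rw [sq_abs] at t2
    have t3 : Real.sqrt (‖y.1‖ ^ 2 + wnorm y.2 ^ 2) = ‖y‖ := by
      rw [hwsq, ← add_assoc, ← hnorm]
    calc |F y.1 + G y.2| ≤ ‖F‖ * ‖y.1‖ + |NG| * wnorm y.2 := t1
      _ ≤ Real.sqrt (‖F‖ ^ 2 + NG ^ 2) * Real.sqrt (‖y.1‖ ^ 2 + wnorm y.2 ^ 2) := t2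
      _ = Real.sqrt (‖F‖ ^ 2 + NG ^ 2) * ‖y‖ := by rw [t3]
  let Lcl : WProd V Q →L[ℝ] ℝ := Llin.mkContinuous (Real.sqrt (‖F‖ ^ 2 + NG ^ 2)) hLbound
  have hLnorm : ‖Lcl‖ ≤ Real.sqrt (‖F‖ ^ 2 + NG ^ 2) :=
    Llin.mkContinuous_norm_le (Real.sqrt_nonneg _) hLbound
  obtain ⟨hEU, hEst⟩ := bbb_aux Abil hsA δ hδ hlb Lcl
  have hLcl_apply : ∀ y : WProd V Q, Lcl y = F y.1 + G y.2 := fun y => rfl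
  have hiff : ∀ up : V × Q,
      ((∀ v, a up.1 v + b v up.2 = F v) ∧ (∀ q, b up.1 q - t ^ 2 * c up.2 q = G q)) ↔
      (∀ y : WProd V Q, Abil (show WProd V Q from up) y = Lcl y) := by
    intro up
    constructor
    · rintro ⟨hFv, hGq⟩ y
      rw [hA_apply, hLcl_apply]
      have e1 := hFv y.1
      have e2 := hGq y.2
      linarith
    · intro h
      constructor
      · intro v
        have h9 := h (show WProd V Q from (v, 0))
        rw [hA_apply, hLcl_apply] at h9
        have hz1 : b up.1 (0:Q) = 0 := map_zero _
        have hz2 : c up.2 (0:Q) = 0 := map_zero _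
        have hz3 : G 0 = 0 := hG.map_zero
        show a up.1 v + b v up.2 = F v
        have h10 : a up.1 v + b v up.2 + b up.1 (0:Q) - t ^ 2 * c up.2 (0:Q)
            = F v + G 0 := h9
        rw [hz1, hz2, hz3] at h10
        linarith
      · intro q
        have h9 := h (show WProd V Q from (0, q))
        rw [hA_apply, hLcl_apply] at h9
        have h10 : a up.1 (0:V) + b (0:V) up.2 + b up.1 q - t ^ 2 * c up.2 q
            = F 0 + G q := h9
        rw [map_zero, map_zero, LinearMap.zero_apply, map_zero] at h10
        show b up.1 q - t ^ 2 * c up.2 q = G q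
        linarith
  constructor
  · obtain ⟨x0, hx0, hx0u⟩ := hEU
    refine ⟨x0, (hiff x0).mpr hx0, ?_⟩
    intro y hy
    exact hx0u y ((hiff y).mp hy)
  · intro up hup
    have hEs := hEst (show WProd V Q from up) ((hiff up).mp hup)
    have hchain : δ * ‖(show WProd V Q from up)‖ ≤ Real.sqrt (‖F‖ ^ 2 + NG ^ 2) :=
      hEs.trans hLnorm
    have hnn := norm_nonneg (show WProd V Q from up)
    have hKL2 : Real.sqrt (‖F‖ ^ 2 + NG ^ 2) ^ 2 = ‖F‖ ^ 2 + NG ^ 2 :=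
      Real.sq_sqrt (by positivity)
    have h8 : ‖(show WProd V Q from up)‖ ≤ δ⁻¹ * Real.sqrt (‖F‖ ^ 2 + NG ^ 2) := by
      calc ‖(show WProd V Q from up)‖ = δ⁻¹ * (δ * ‖(show WProd V Q from up)‖) := by
            field_simp
        _ ≤ δ⁻¹ * Real.sqrt (‖F‖ ^ 2 + NG ^ 2) :=
            mul_le_mul_of_nonneg_left hchain (inv_nonneg.mpr hδ.le)
    have hgoal : ‖(show WProd V Q from up)‖ ^ 2 ≤ (δ⁻¹) ^ 2 * (‖F‖ ^ 2 + NG ^ 2) := by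
      rw [← hKL2]
      nlinarith [mul_self_le_mul_self hnn h8, Real.sqrt_nonneg (‖F‖ ^ 2 + NG ^ 2),
        inv_nonneg.mpr hδ.le]
    rw [hnormsq] at hgoal
    exact hgoal
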